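/- For the triangle in M_4(ℂ) with edge algebras D_{12} = u(M₂⊗I₂)u, D_{23} = v(M₂⊗I₂)v, D_{13} = I₂⊗M₂, the pairwise intersections satisfy D_{12} ∩ D_{13} = ℂ·I₄ and D_{23} ∩ D_{13} = ℂ·I₄. -/

import Mathlib

open Matrix

noncomputable section

/-- Identification `M₂(ℂ) ⊗ M₂(ℂ) ≅ M₄(ℂ)`: the Kronecker (block) tensor product,
with index `(i₁,i₂) ↦ 2·i₁+i₂`. -/
def tens (a b : Matrix (Fin 2) (Fin 2) ℂ) : Matrix (Fin 4) (Fin 4) ℂ :=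
  Matrix.reindex finProdFinEquiv finProdFinEquiv (Matrix.kroneckerMap (· * ·) a b)

/-- The permutation matrix with 1's at positions (1,1),(2,4),(3,3),(4,2). -/
def uMat : Matrix (Fin 4) (Fin 4) ℂ := !![1,0,0,0; 0,0,0,1; 0,0,1,0; 0,1,0,0]

/-- The permutation matrix with 1's at positions (1,1),(2,2),(3,4),(4,3). -/
def vMat : Matrix (Fin 4) (Fin 4) ℂ := !![1,0,0,0; 0,1,0,0; 0,0,0,1; 0,0,1,0]

/-- `e_u(i,j) = u (e(i,j) ⊗ I₂) u`. -/
def eU (i j : Fin 2) : Matrix (Fin 4) (Fin 4) ℂ :=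
  uMat * tens (Matrix.single i j 1) 1 * uMat

/-- `e_v(i,j) = v (e(i,j) ⊗ I₂) v`. -/
def eV (i j : Fin 2) : Matrix (Fin 4) (Fin 4) ℂ :=
  vMat * tens (Matrix.single i j 1) 1 * vMat

/-- `e_0(i,j) = I₂ ⊗ e(i,j)`. -/
def e0 (i j : Fin 2) : Matrix (Fin 4) (Fin 4) ℂ :=
  tens 1 (Matrix.single i j 1)

end

lemma tens_eq (a b : Matrix (Fin 2) (Fin 2) ℂ) :
    tens a b = !![a 0 0 * b 0 0, a 0 0 * b 0 1, a 0 1 * b 0 0, a 0 1 * b 0 1;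
                  a 0 0 * b 1 0, a 0 0 * b 1 1, a 0 1 * b 1 0, a 0 1 * b 1 1;
                  a 1 0 * b 0 0, a 1 0 * b 0 1, a 1 1 * b 0 0, a 1 1 * b 0 1;
                  a 1 0 * b 1 0, a 1 0 * b 1 1, a 1 1 * b 1 0, a 1 1 * b 1 1] := by
  ext i j
  fin_cases i <;> fin_cases j <;>
    simp [tens, Matrix.reindex_apply, Matrix.kroneckerMap_apply, finProdFinEquiv] <;> rfl

lemma lhsU (a : Matrix (Fin 2) (Fin 2) ℂ) :
    uMat * tens a 1 * uMat = !![a 0 0, 0, a 0 1, 0;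
                                0, a 1 1, 0, a 1 0;
                                a 1 0, 0, a 1 1, 0;
                                0, a 0 1, 0, a 0 0] := by
  rw [tens_eq]
  ext i j
  fin_cases i <;> fin_cases j <;>
    simp [uMat, Matrix.mul_apply, Fin.sum_univ_four, Matrix.one_apply, Matrix.vecHead, Matrix.vecTail]

lemma lhsV (a : Matrix (Fin 2) (Fin 2) ℂ) :
    vMat * tens a 1 * vMat = !![a 0 0, 0, 0, a 0 1;
                                0, a 0 0, a 0 1, 0;
                                0, a 1 0, a 1 1, 0;
                                a 1 0, 0, 0, a 1 1] := by
  rw [tens_eq]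
  ext i j
  fin_cases i <;> fin_cases j <;>
    simp [vMat, Matrix.mul_apply, Fin.sum_univ_four, Matrix.one_apply, Matrix.vecHead, Matrix.vecTail]

lemma rhs0 (b : Matrix (Fin 2) (Fin 2) ℂ) :
    tens 1 b = !![b 0 0, b 0 1, 0, 0;
                  b 1 0, b 1 1, 0, 0;
                  0, 0, b 0 0, b 0 1;
                  0, 0, b 1 0, b 1 1] := by
  rw [tens_eq]
  ext i j
  fin_cases i <;> fin_cases j <;> simp [Matrix.one_apply, Matrix.vecHead, Matrix.vecTail]

lemma scal (c : ℂ) : c • (1 : Matrix (Fin 4) (Fin 4) ℂ) = !![c,0,0,0;0,c,0,0;0,0,c,0;0,0,0,c] := by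
  ext i j
  fin_cases i <;> fin_cases j <;> simp [Matrix.one_apply, Matrix.vecHead, Matrix.vecTail]


lemma tens_smul_l (c : ℂ) : tens (c • 1) 1 = c • (1 : Matrix (Fin 4) (Fin 4) ℂ) := by
  rw [tens_eq]
  ext i j
  fin_cases i <;> fin_cases j <;>
    simp [Matrix.one_apply, Matrix.vecHead, Matrix.vecTail]

lemma tens_smul_r (c : ℂ) : tens 1 (c • 1) = c • (1 : Matrix (Fin 4) (Fin 4) ℂ) := by
  rw [tens_eq]
  ext i j
  fin_cases i <;> fin_cases j <;>
    simp [Matrix.one_apply, Matrix.vecHead, Matrix.vecTail]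

lemma uu : uMat * uMat = 1 := by
  ext i j
  fin_cases i <;> fin_cases j <;>
    simp [uMat, Matrix.mul_apply, Fin.sum_univ_four, Matrix.one_apply, Matrix.vecHead, Matrix.vecTail]

lemma vv : vMat * vMat = 1 := by
  ext i j
  fin_cases i <;> fin_cases j <;>
    simp [vMat, Matrix.mul_apply, Fin.sum_univ_four, Matrix.one_apply, Matrix.vecHead, Matrix.vecTail]


/-- For the triangle in `M₄(ℂ)` with edge algebras `D₁₂ = u(M₂⊗I₂)u`,
`D₂₃ = v(M₂⊗I₂)v`, `D₁₃ = I₂⊗M₂`, one has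
`D₁₂ ∩ D₁₃ = ℂ·I₄` and `D₂₃ ∩ D₁₃ = ℂ·I₄`. -/
theorem stmt19 :
    ({x : Matrix (Fin 4) (Fin 4) ℂ | ∃ a : Matrix (Fin 2) (Fin 2) ℂ, x = uMat * tens a 1 * uMat} ∩
        {x : Matrix (Fin 4) (Fin 4) ℂ | ∃ b : Matrix (Fin 2) (Fin 2) ℂ, x = tens 1 b}
      = {x : Matrix (Fin 4) (Fin 4) ℂ | ∃ c : ℂ, x = c • (1 : Matrix (Fin 4) (Fin 4) ℂ)}) ∧
    ({x : Matrix (Fin 4) (Fin 4) ℂ | ∃ a : Matrix (Fin 2) (Fin 2) ℂ, x = vMat * tens a 1 * vMat} ∩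
        {x : Matrix (Fin 4) (Fin 4) ℂ | ∃ b : Matrix (Fin 2) (Fin 2) ℂ, x = tens 1 b}
      = {x : Matrix (Fin 4) (Fin 4) ℂ | ∃ c : ℂ, x = c • (1 : Matrix (Fin 4) (Fin 4) ℂ)}) := by
  constructor
  · ext x
    simp only [Set.mem_inter_iff, Set.mem_setOf_eq]
    constructor
    · rintro ⟨⟨a, rfl⟩, b, hb⟩
      rw [lhsU, rhs0] at hb
      have e := fun i j => congrFun (congrFun hb i) j
      have e01 : (0 : ℂ) = b 0 1 := by simpa using e 0 1
      have e02 : a 0 1 = 0 := by simpa using e 0 2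
      have e10 : (0 : ℂ) = b 1 0 := by simpa using e 1 0
      have e11 : a 1 1 = b 1 1 := by simpa using e 1 1
      have e13 : a 1 0 = 0 := by simpa using e 1 3
      have e22 : a 1 1 = b 0 0 := by simpa using e 2 2
      have e00 : a 0 0 = b 0 0 := by simpa using e 0 0
      refine ⟨b 0 0, ?_⟩
      rw [lhsU, scal]
      ext i j
      fin_cases i <;> fin_cases j <;>
        simp [e00, e02, e13, e22, Matrix.vecHead, Matrix.vecTail]
    · rintro ⟨c, rfl⟩
      exact ⟨⟨c • 1, by rw [tens_smul_l, Matrix.mul_smul, Matrix.smul_mul, mul_one, uu]⟩,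
             c • 1, by rw [tens_smul_r]⟩
  · ext x
    simp only [Set.mem_inter_iff, Set.mem_setOf_eq]
    constructor
    · rintro ⟨⟨a, rfl⟩, b, hb⟩
      rw [lhsV, rhs0] at hb
      have e := fun i j => congrFun (congrFun hb i) j
      have e03 : a 0 1 = 0 := by simpa using e 0 3
      have e30 : a 1 0 = 0 := by simpa using e 3 0
      have e22 : a 1 1 = b 0 0 := by simpa using e 2 2
      have e00 : a 0 0 = b 0 0 := by simpa using e 0 0
      refine ⟨b 0 0, ?_⟩
      rw [lhsV, scal]
      ext i j
      fin_cases i <;> fin_cases j <;>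
        simp [e00, e03, e30, e22, Matrix.vecHead, Matrix.vecTail]
    · rintro ⟨c, rfl⟩
      exact ⟨⟨c • 1, by rw [tens_smul_l, Matrix.mul_smul, Matrix.smul_mul, mul_one, vv]⟩,
             c • 1, by rw [tens_smul_r]⟩
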